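/- The class of finite trees with vertex degree bound d is hyperfinite: for every ε > 0 there exists K such that from any finite tree T with degrees ≤ d one can remove at most ε|V(T)| edges so that every component of the resulting forest has at most K vertices. -/

import Mathlib

open SimpleGraph Finset

namespace TreeHyperAux

variable {V : Type*} {G : SimpleGraph V}

lemma dist_le_of_mem_support {r x w : V} (p : G.Walk r x) (hw : w ∈ p.support) :
    G.dist r w ≤ p.length := by
  classical
  exact le_trans (SimpleGraph.dist_le _) (p.length_takeUntil_le hw)

lemma getVert_ne {u v : V} {p : G.Walk u v} (hp : p.IsPath) {i j : ℕ}
    (hij : i < j) (hj : j ≤ p.length) : p.getVert i ≠ p.getVert j := by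
  induction p generalizing i j with
  | nil => simp at hj; omega
  | @cons a b c h q ih =>
    obtain ⟨j, rfl⟩ : ∃ j', j = j' + 1 := ⟨j - 1, by omega⟩
    rw [Walk.getVert_cons_succ]
    have hj' : j ≤ q.length := by simpa [Walk.length_cons] using hj
    cases i with
    | zero =>
      have h0 : (Walk.cons h q).getVert 0 = a := Walk.getVert_zero _
      rw [h0]
      intro hc
      have hmem : q.getVert j ∈ q.support :=
        Walk.mem_support_iff_exists_getVert.mpr ⟨j, rfl, hj'⟩
      rw [← hc] at hmem
      exact ((Walk.cons_isPath_iff h q).mp hp).2 hmem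
    | succ i =>
      rw [Walk.getVert_cons_succ]
      exact ih hp.of_cons (by omega) hj'

lemma isPath_concat {u v w : V} {p : G.Walk u v} (hp : p.IsPath) (h : G.Adj v w)
    (hw : w ∉ p.support) : (p.concat h).IsPath := by
  rw [← Walk.isPath_reverse_iff, Walk.reverse_concat]
  exact Walk.IsPath.cons hp.reverse (by simpa using hw)

/-- In a tree, adjacent vertices have different distances from any root. -/
lemma adj_dist_ne (hT : G.IsTree) (r : V) {u v : V} (h : G.Adj u v) :
    G.dist r u ≠ G.dist r v := by
  classical
  intro heq
  obtain ⟨p, hp, hpl⟩ := hT.isConnected.exists_path_of_dist r u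
  have hvs : v ∉ p.support := by
    intro hv
    have h1 : G.dist r v ≤ (p.takeUntil v hv).length := SimpleGraph.dist_le _
    have h2 := p.length_takeUntil_le hv
    have h4 := congrArg Walk.length (p.take_spec hv)
    rw [Walk.length_append] at h4
    have h5 : G.dist v u ≤ (p.dropUntil v hv).length := SimpleGraph.dist_le _
    have h6 : G.dist v u = 0 := by omega
    have h7 : v = u := hT.isConnected.dist_eq_zero_iff.mp h6
    exact h.ne' h7
  have hcp : (p.concat h).IsPath := isPath_concat hp h hvs
  obtain ⟨q, hq, hql⟩ := hT.isConnected.exists_path_of_dist r v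
  have huniq := hT.existsUnique_path r v
  obtain ⟨pp, -, hun⟩ := huniq
  have e1 : p.concat h = pp := hun _ hcp
  have e2 : q = pp := hun _ hq
  have : (p.concat h).length = q.length := by rw [e1, e2]
  rw [Walk.length_concat, hpl, hql] at this
  omega

/-- In a tree, a vertex cannot have two distinct neighbors both one level above it. -/
lemma no_local_max (hT : G.IsTree) (r : V) {u x y : V} (hx : G.Adj x u) (hy : G.Adj y u)
    (hxy : x ≠ y) (hdx : G.dist r x + 1 = G.dist r u) (hdy : G.dist r y + 1 = G.dist r u) :
    False := by
  obtain ⟨px, hpx, hpxl⟩ := hT.isConnected.exists_path_of_dist r x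
  obtain ⟨py, hpy, hpyl⟩ := hT.isConnected.exists_path_of_dist r y
  have hux : u ∉ px.support := fun hu => by
    have := dist_le_of_mem_support px hu; omega
  have huy : u ∉ py.support := fun hu => by
    have := dist_le_of_mem_support py hu; omega
  have hcx : (px.concat hx).IsPath := isPath_concat hpx hx hux
  have hcy : (py.concat hy).IsPath := isPath_concat hpy hy huy
  obtain ⟨pp, -, hun⟩ := hT.existsUnique_path r u
  have e : px.concat hx = py.concat hy := by rw [hun _ hcx, hun _ hcy]
  have hgx : (px.concat hx).getVert px.length = x := by
    rw [Walk.concat_eq_append, Walk.getVert_append]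
    simp
  have hgy : (py.concat hy).getVert py.length = y := by
    rw [Walk.concat_eq_append, Walk.getVert_append]
    simp
  have hlen : px.length = py.length := by rw [hpxl, hpyl]; omega
  apply hxy
  rw [← hgx, ← hgy, ← hlen, e]

/-- Adjacent vertices in a tree have distances from `r` differing by exactly one. -/
lemma adj_dist_step (hT : G.IsTree) (r : V) {u v : V} (h : G.Adj u v) :
    G.dist r v = G.dist r u + 1 ∨ G.dist r u = G.dist r v + 1 := by
  have h1 : G.dist r v ≤ G.dist r u + 1 := by
    have := hT.isConnected.dist_triangle (u := r) (v := u) (w := v)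
    rwa [SimpleGraph.dist_eq_one_iff_adj.mpr h] at this
  have h2 : G.dist r u ≤ G.dist r v + 1 := by
    have := hT.isConnected.dist_triangle (u := r) (v := v) (w := u)
    rwa [SimpleGraph.dist_eq_one_iff_adj.mpr h.symm] at this
  have h3 := adj_dist_ne hT r h
  omega

/-! ### Numeric band lemmas -/

lemma band_succ {L i a : ℕ} (hi : i < L) (ha : a % L ≠ i) :
    (a + 1 + (L - 1 - i)) / L = (a + (L - 1 - i)) / L := by
  have hc : a + 1 + (L - 1 - i) = (a + (L - 1 - i)) + 1 := by omega
  rw [hc, Nat.succ_div]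
  have hnd : ¬ L ∣ (a + (L - 1 - i)) + 1 := by
    intro ⟨k, hk⟩
    have hk1 : 1 ≤ k := by
      rcases Nat.eq_zero_or_pos k with rfl | hp
      · omega
      · omega
    obtain ⟨k', rfl⟩ : ∃ k', k = k' + 1 := ⟨k - 1, by omega⟩
    have hae : a = L * k' + i := by
      have : L * (k' + 1) = L * k' + L := by ring
      omega
    apply ha
    rw [hae, Nat.mul_add_mod, Nat.mod_eq_of_lt hi]
  simp [hnd]

lemma band_diff {L a b c : ℕ} (hL : 0 < L) (h : (a + c) / L = (b + c) / L) :
    a ≤ b + L := by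
  have h1 := Nat.div_add_mod (a + c) L
  have h2 := Nat.div_add_mod (b + c) L
  have h3 : (a + c) % L < L := Nat.mod_lt _ hL
  have h4 : (b + c) % L < L := Nat.mod_lt _ hL
  rw [h] at h1
  generalize L * ((b + c) / L) = m at h1 h2
  omega

/-! ### A ±1 sequence with no local maximum and bounded range is short -/

lemma seq_bound (s : ℕ → ℕ) (k L : ℕ)
    (hstep : ∀ j, j < k → s (j + 1) = s j + 1 ∨ s j = s (j + 1) + 1)
    (hup : ∀ j, j + 2 ≤ k → s (j + 1) = s j + 1 → s (j + 2) = s (j + 1) + 1)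
    (hpair : ∀ j, j ≤ k → ∀ j', j' ≤ k → s j ≤ s j' + L) :
    k ≤ 2 * L := by
  by_cases hex : ∃ t, t < k ∧ s (t + 1) = s t + 1
  · classical
    obtain ⟨ht, htt⟩ := Nat.find_spec hex
    have hmin : ∀ j, j < Nat.find hex → ¬(j < k ∧ s (j + 1) = s j + 1) :=
      fun j hj => Nat.find_min hex hj
    generalize hgen : Nat.find hex = t at ht htt hmin
    -- decreasing before t
    have hdec : ∀ j, j ≤ t → s j + j = s 0 + 0 := by
      intro j hj
      induction j with
      | zero => rfl
      | succ m ih =>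
        have hm := ih (by omega)
        have hmk : m < k := by omega
        have : s m = s (m + 1) + 1 := by
          rcases hstep m hmk with hc | hc
          · exact absurd ⟨hmk, hc⟩ (hmin m (by omega))
          · exact hc
        omega
    -- increasing after t
    have hinc1 : ∀ m, t + m + 1 ≤ k → s (t + m + 1) = s (t + m) + 1 := by
      intro m
      induction m with
      | zero => intro _; exact htt
      | succ p ih =>
        intro hpk
        have hprev := ih (by omega)
        have := hup (t + p) (by omega) hprev
        have he : t + (p + 1) + 1 = t + p + 2 := by omega
        have he2 : t + (p + 1) = t + p + 1 := by omega
        rw [he, he2]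
        exact this
    have hinc : ∀ m, t + m ≤ k → s (t + m) = s t + m := by
      intro m
      induction m with
      | zero => intro _; rfl
      | succ p ih =>
        intro hpk
        have h1 := hinc1 p (by omega)
        have h2 := ih (by omega)
        have he : t + (p + 1) = t + p + 1 := by omega
        rw [he, h1, h2]
        omega
    have hd := hdec t le_rfl
    have hi := hinc (k - t) (by omega)
    have hp1 := hpair 0 (by omega) t (by omega)
    have hp2 := hpair k le_rfl t (by omega)
    have he : t + (k - t) = k := by omega
    rw [he] at hi
    omega
  · push_neg at hex
    have hdec : ∀ j, j ≤ k → s j + j = s 0 + 0 := by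
      intro j hj
      induction j with
      | zero => rfl
      | succ m ih =>
        have hm := ih (by omega)
        have hmk : m < k := by omega
        have : s m = s (m + 1) + 1 := by
          rcases hstep m hmk with hc | hc
          · exact absurd hc (hex m hmk)
          · exact hc
        omega
    have := hdec k le_rfl
    have := hpair 0 (by omega) k le_rfl
    omega

/-! ### Ball size bound -/

lemma ball_card_le {V : Type*} [Fintype V] {G : SimpleGraph V} (hG : G.Connected)
    {d : ℕ} (hdeg : ∀ v, (G.neighborSet v).ncard ≤ d) (v : V) (R : ℕ) :
    {w | G.dist v w ≤ R}.ncard ≤ (d + 1) ^ R := by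
  classical
  induction R with
  | zero =>
    have : {w | G.dist v w ≤ 0} = {v} := by
      ext w
      simp only [Set.mem_setOf_eq, Nat.le_zero, Set.mem_singleton_iff]
      rw [hG.dist_eq_zero_iff]
      exact eq_comm
    rw [this]
    simp
  | succ R ih =>
    set B : Finset V := (Set.toFinite {w | G.dist v w ≤ R}).toFinset with hB
    have hBcard : B.card = {w | G.dist v w ≤ R}.ncard :=
      (Set.ncard_eq_toFinset_card _ _).symm
    set N : V → Finset V := fun u => insert u ((Set.toFinite (G.neighborSet u)).toFinset)
      with hN
    have hNcard : ∀ u, (N u).card ≤ d + 1 := by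
      intro u
      refine le_trans (Finset.card_insert_le _ _) ?_
      have : ((Set.toFinite (G.neighborSet u)).toFinset).card = (G.neighborSet u).ncard :=
        (Set.ncard_eq_toFinset_card _ _).symm
      rw [this]
      exact Nat.add_le_add_right (hdeg u) 1
    have hsub : {w | G.dist v w ≤ R + 1} ⊆ ↑(B.biUnion N) := by
      intro w hw
      simp only [Set.mem_setOf_eq] at hw
      simp only [Finset.coe_biUnion, Set.mem_iUnion, Finset.mem_coe]
      rcases Nat.lt_or_ge (G.dist v w) (R + 1) with hlt | hge
      · refine ⟨w, ?_, ?_⟩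
        · simp [hB, Set.Finite.mem_toFinset]; omega
        · simp [hN]
      · have hdw : G.dist v w = R + 1 := by omega
        have hne : v ≠ w := by
          intro hvw; rw [hvw] at hdw; simp [SimpleGraph.dist_self] at hdw
        obtain ⟨p, hpl⟩ := hG.exists_walk_length_eq_dist v w
        have hne' : w ≠ v := hne.symm
        obtain ⟨x, h, q, hq⟩ := Walk.exists_eq_cons_of_ne hne' p.reverse
        have hql : q.length = R := by
          have := congrArg Walk.length hq
          rw [Walk.length_reverse, Walk.length_cons, hpl, hdw] at this
          omega
        have hdx : G.dist v x ≤ R := by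
          have h5 := SimpleGraph.dist_le q.reverse
          rwa [Walk.length_reverse, hql] at h5
        refine ⟨x, ?_, ?_⟩
        · simp [hB, Set.Finite.mem_toFinset]; exact hdx
        · simp [hN, Set.Finite.mem_toFinset]
          right
          exact h.symm
    calc {w | G.dist v w ≤ R + 1}.ncard ≤ (↑(B.biUnion N) : Set V).ncard :=
          Set.ncard_le_ncard hsub (Set.toFinite _)
      _ = (B.biUnion N).card := Set.ncard_coe_finset _
      _ ≤ ∑ u ∈ B, (N u).card := Finset.card_biUnion_le
      _ ≤ ∑ _u ∈ B, (d + 1) := Finset.sum_le_sum fun u _ => hNcard u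
      _ = B.card * (d + 1) := by rw [Finset.sum_const, smul_eq_mul]
      _ ≤ (d + 1) ^ R * (d + 1) := by
          exact Nat.mul_le_mul_right _ (hBcard ▸ ih)
      _ = (d + 1) ^ (R + 1) := by ring

end TreeHyperAux

open TreeHyperAux

/-- The class of finite trees with vertex degree bound `d` is hyperfinite:
for every `ε > 0` there is `K` such that from any finite tree one can delete
at most `ε|V|` edges leaving all components of size at most `K`. -/
theorem finite_trees_hyperfinite (d : ℕ) :
    ∀ ε : ℝ, 0 < ε → ∃ K : ℕ, ∀ n (T : SimpleGraph (Fin n)),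
      T.IsTree → (∀ v, (T.neighborSet v).ncard ≤ d) →
      ∃ T' : SimpleGraph (Fin n), T' ≤ T ∧
        ((T.edgeSet \ T'.edgeSet).ncard : ℝ) ≤ ε * (n : ℝ) ∧
        (∀ v : Fin n, {w | T'.Reachable v w}.ncard ≤ K) := by
  intro ε hε
  classical
  set L : ℕ := ⌈1 / ε⌉₊ with hLdef
  have hL1 : 1 ≤ L := by
    rw [hLdef]
    exact Nat.one_le_ceil_iff.mpr (by positivity)
  have hεL : 1 ≤ ε * L := by
    have h1 : (1 : ℝ) / ε ≤ (L : ℝ) := Nat.le_ceil _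
    rw [div_le_iff₀ hε] at h1
    calc (1:ℝ) ≤ L * ε := h1
      _ = ε * L := by ring
  refine ⟨(d + 1) ^ (2 * L), ?_⟩
  intro n T hT hdeg
  have hconn := hT.isConnected
  obtain ⟨r⟩ := hconn.nonempty
  haveI : Fintype ↥T.edgeSet := (Set.toFinite T.edgeSet).fintype
  set lev : Fin n → ℕ := fun u => T.dist r u with hlev
  -- the class of an edge
  set f : Sym2 (Fin n) → ℕ :=
    Sym2.lift ⟨fun a b => min (lev a) (lev b) % L, fun a b => by simp [min_comm]⟩ with hf
  have hfmk : ∀ a b : Fin n, f s(a, b) = min (lev a) (lev b) % L := fun a b => rfl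
  have hEcard : T.edgeFinset.card + 1 = n := by
    have h1 := hT.card_edgeFinset
    rwa [Fintype.card_fin] at h1
  -- pigeonhole: choose a good residue class
  have hsum : ∑ j ∈ Finset.range L, (T.edgeFinset.filter (fun e => f e = j)).card
      = T.edgeFinset.card := by
    rw [← Finset.card_eq_sum_card_fiberwise]
    intro e _
    rw [Finset.mem_coe, Finset.mem_range]
    induction e using Sym2.ind with
    | _ a b =>
      rw [hfmk]
      exact Nat.mod_lt _ (Nat.lt_of_lt_of_le Nat.zero_lt_one hL1)
  have hpig : ∃ j ∈ Finset.range L,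
      L * (T.edgeFinset.filter (fun e => f e = j)).card ≤ T.edgeFinset.card := by
    by_contra hc
    push_neg at hc
    have hlt : L * T.edgeFinset.card <
        ∑ j ∈ Finset.range L, (L * (T.edgeFinset.filter (fun e => f e = j)).card) := by
      calc L * T.edgeFinset.card = ∑ _j ∈ Finset.range L, T.edgeFinset.card := by
            rw [Finset.sum_const, Finset.card_range, smul_eq_mul]
        _ < _ :=
            Finset.sum_lt_sum_of_nonempty ⟨0, Finset.mem_range.mpr (by omega)⟩
              fun j hj => hc j hj
    rw [← Finset.mul_sum, hsum] at hlt
    exact lt_irrefl _ hlt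
  obtain ⟨i, hiL, hicard⟩ := hpig
  rw [Finset.mem_range] at hiL
  set S : Finset (Sym2 (Fin n)) := T.edgeFinset.filter (fun e => f e = i) with hS
  refine ⟨T.deleteEdges ↑S, T.deleteEdges_le _, ?_, ?_⟩
  · -- edge count
    have hSsub : (↑S : Set (Sym2 (Fin n))) ⊆ T.edgeSet := by
      intro e he
      rw [Finset.mem_coe, hS, Finset.mem_filter, SimpleGraph.mem_edgeFinset] at he
      exact he.1
    have hdiff : T.edgeSet \ (T.deleteEdges ↑S).edgeSet = ↑S := by
      rw [SimpleGraph.edgeSet_deleteEdges, Set.diff_diff_cancel_left hSsub]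
    rw [hdiff, Set.ncard_coe_finset]
    have hcardn : (S.card : ℝ) * L ≤ n := by
      have h2 : L * S.card ≤ n := le_trans hicard (by omega)
      calc (S.card : ℝ) * L = ((L * S.card : ℕ) : ℝ) := by push_cast; ring
        _ ≤ n := by exact_mod_cast h2
    have h0 : (0:ℝ) ≤ (S.card : ℝ) := Nat.cast_nonneg _
    nlinarith
  · -- component sizes
    intro v
    set band : ℕ → ℕ := fun a => (a + (L - 1 - i)) / L with hband
    have hstepadj : ∀ a b : Fin n, (T.deleteEdges ↑S).Adj a b →
        (lev b = lev a + 1 ∧ lev a % L ≠ i) ∨ (lev a = lev b + 1 ∧ lev b % L ≠ i) := by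
      intro a b hab
      rw [SimpleGraph.deleteEdges_adj] at hab
      obtain ⟨hab1, hab2⟩ := hab
      have hfne : min (lev a) (lev b) % L ≠ i := by
        intro hfe
        apply hab2
        rw [Finset.mem_coe, hS, Finset.mem_filter, SimpleGraph.mem_edgeFinset]
        exact ⟨hab1, by rw [hfmk]; exact hfe⟩
      rcases adj_dist_step hT r hab1 with hc | hc
      · have hc2 : lev b = lev a + 1 := hc
        left
        refine ⟨hc2, ?_⟩
        rwa [min_eq_left (by omega : lev a ≤ lev b)] at hfne
      · have hc2 : lev a = lev b + 1 := hc
        right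
        refine ⟨hc2, ?_⟩
        rwa [min_eq_right (by omega : lev b ≤ lev a)] at hfne
    have hband_adj : ∀ a b : Fin n, (T.deleteEdges ↑S).Adj a b →
        band (lev a) = band (lev b) := by
      intro a b hab
      rcases hstepadj a b hab with ⟨hc, hm⟩ | ⟨hc, hm⟩
      · rw [hc]
        exact (band_succ hiL hm).symm
      · rw [hc]
        exact band_succ hiL hm
    have hbandW : ∀ (a b : Fin n) (q : (T.deleteEdges ↑S).Walk a b),
        band (lev a) = band (lev b) := by
      intro a b q
      induction q with
      | nil => rfl
      | cons h q ih => exact (hband_adj _ _ h).trans ih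
    have hkey : ∀ w : Fin n, (T.deleteEdges ↑S).Reachable v w → T.dist v w ≤ 2 * L := by
      intro w hr
      obtain ⟨p0⟩ := hr
      set p : (T.deleteEdges ↑S).Walk v w := p0.toPath.1 with hp
      have hppath : p.IsPath := p0.toPath.2
      have hle : T.deleteEdges ↑S ≤ T := T.deleteEdges_le _
      set s : ℕ → ℕ := fun j => lev (p.getVert j) with hs
      have hstep : ∀ j, j < p.length → s (j + 1) = s j + 1 ∨ s j = s (j + 1) + 1 := by
        intro j hj
        rcases hstepadj _ _ (p.adj_getVert_succ hj) with ⟨hc, -⟩ | ⟨hc, -⟩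
        · left; exact hc
        · right; exact hc
      have hup : ∀ j, j + 2 ≤ p.length → s (j + 1) = s j + 1 → s (j + 2) = s (j + 1) + 1 := by
        intro j hj hinc
        rcases hstep (j + 1) (by omega) with hc | hc
        · exact hc
        · exfalso
          refine no_local_max hT r (u := p.getVert (j + 1)) (x := p.getVert j)
            (y := p.getVert (j + 2)) ?_ ?_ ?_ ?_ ?_
          · exact hle (p.adj_getVert_succ (by omega))
          · exact (hle (p.adj_getVert_succ (i := j + 1) (by omega))).symm
          · exact getVert_ne hppath (by omega) (by omega)
          · exact hinc.symm
          · exact hc.symm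
      have hpair : ∀ j, j ≤ p.length → ∀ j', j' ≤ p.length → s j ≤ s j' + L := by
        intro j hj j' hj'
        have h1 : band (s j) = band (lev w) := hbandW _ _ (p.drop j)
        have h2 : band (s j') = band (lev w) := hbandW _ _ (p.drop j')
        have h3 : band (s j) = band (s j') := h1.trans h2.symm
        exact band_diff (by omega) h3
      have hlen : p.length ≤ 2 * L := seq_bound s p.length L hstep hup hpair
      have hd : T.dist v w ≤ (p.mapLe hle).length := SimpleGraph.dist_le _
      have hml : (p.mapLe hle).length = p.length := by
        simp [Walk.mapLe]
      rw [hml] at hd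
      exact le_trans hd hlen
    have hsub : {w | (T.deleteEdges ↑S).Reachable v w} ⊆ {w | T.dist v w ≤ 2 * L} :=
      fun w hw => hkey w hw
    calc {w | (T.deleteEdges ↑S).Reachable v w}.ncard
        ≤ {w | T.dist v w ≤ 2 * L}.ncard := Set.ncard_le_ncard hsub (Set.toFinite _)
      _ ≤ (d + 1) ^ (2 * L) := ball_card_le hconn hdeg v (2 * L)
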